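/- For m ≥ 1, the stabilizer in O(2) of the polynomial p_m(x,y) = Re((x+iy)^m) under the action (φ·P)(x,y) = P(φ⁻¹(x,y)) is exactly the dihedral group D_m = ⟨σ_m, τ⟩. -/

import Mathlib

open MvPolynomial Real Matrix Complex

/-- The rotation of `ℝ²` by angle `θ`. -/
noncomputable def rotMat (θ : ℝ) : Matrix (Fin 2) (Fin 2) ℝ :=
  !![Real.cos θ, -Real.sin θ; Real.sin θ, Real.cos θ]

/-- The reflection `τ(x,y) = (x,-y)` (complex conjugation on `ℂ ≅ ℝ²`). -/
noncomputable def reflMat : Matrix (Fin 2) (Fin 2) ℝ := !![1, 0; 0, -1]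

noncomputable def toC (v : Fin 2 → ℝ) : ℂ := (v 0 : ℂ) + (v 1 : ℂ) * Complex.I

lemma toC_mk (z : ℂ) : toC ![z.re, z.im] = z := by
  simp [toC]

lemma exists_cos_sin (a b : ℝ) (h : a ^ 2 + b ^ 2 = 1) :
    ∃ θ : ℝ, Real.cos θ = a ∧ Real.sin θ = b := by
  set z : ℂ := ⟨a, b⟩ with hz
  have habs : ‖z‖ = 1 := by
    simp [Complex.norm_def, Complex.normSq, hz, ← sq]
    rw [h]
  have hz0 : z ≠ 0 := by
    intro h0; rw [h0] at habs; simp at habs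
  refine ⟨Complex.arg z, ?_, ?_⟩
  · rw [Complex.cos_arg hz0, habs]; simp [hz]
  · rw [Complex.sin_arg, habs]; simp [hz]

lemma rot_mulVec (θ : ℝ) (v : Fin 2 → ℝ) :
    toC ((rotMat θ).mulVec v) = Complex.exp (θ * Complex.I) * toC v := by
  rw [Complex.exp_mul_I]
  simp [toC, rotMat, Matrix.mulVec, dotProduct, Fin.sum_univ_two,
    ← Complex.ofReal_cos, ← Complex.ofReal_sin]
  apply Complex.ext <;> simp <;> ring

lemma refl_mulVec (v : Fin 2 → ℝ) :
    toC (reflMat.mulVec v) = (starRingEnd ℂ) (toC v) := by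
  simp [toC, reflMat, Matrix.mulVec, dotProduct, Fin.sum_univ_two]

lemma key (m : ℕ) (hm : 1 ≤ m) (w : ℂ)
    (h : ∀ z : ℂ, (w * z ^ m).re = (z ^ m).re) : w = 1 := by
  have hm0 : (m : ℝ) ≠ 0 := Nat.cast_ne_zero.mpr (by omega)
  have h1 := h 1
  simp at h1
  have h2 := h (Complex.exp ((π / (2 * m) : ℝ) * Complex.I))
  rw [← Complex.exp_nat_mul] at h2
  have hmC : (m : ℂ) ≠ 0 := Nat.cast_ne_zero.mpr (by omega)
  have e : (m : ℂ) * (((π / (2 * m) : ℝ) : ℂ) * Complex.I) = ((π / 2 : ℝ) : ℂ) * Complex.I := by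
    push_cast
    field_simp
  rw [e, Complex.exp_mul_I] at h2
  simp [← Complex.ofReal_cos, ← Complex.ofReal_sin, Real.cos_pi_div_two,
    Real.sin_pi_div_two] at h2
  exact Complex.ext h1 (by simp [h2])

lemma rotMat_congr (θ₁ θ₂ : ℝ) (j : ℤ) (h : θ₁ = θ₂ + j * (2 * π)) :
    rotMat θ₁ = rotMat θ₂ := by
  subst h
  unfold rotMat
  rw [Real.cos_add_int_mul_two_pi, Real.sin_add_int_mul_two_pi]

lemma angle_lemma (m : ℕ) (hm : 1 ≤ m) (θ : ℝ)
    (h : Complex.exp ((m * θ : ℝ) * Complex.I) = 1) :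
    ∃ k : ℕ, k < m ∧ rotMat θ = rotMat (2 * π * k / m) := by
  have hm0 : (m : ℝ) ≠ 0 := Nat.cast_ne_zero.mpr (by omega)
  have hmz : (0 : ℤ) < (m : ℤ) := by exact_mod_cast hm
  rw [Complex.exp_eq_one_iff] at h
  obtain ⟨n, hn⟩ := h
  have hn2 : ((m * θ : ℝ) : ℂ) * Complex.I = ((2 * π * n : ℝ) : ℂ) * Complex.I := by
    rw [hn]; push_cast; ring
  have hn' := mul_right_cancel₀ Complex.I_ne_zero hn2
  have hnr : (m : ℝ) * θ = 2 * π * n := by exact_mod_cast hn'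
  refine ⟨(n % m).toNat, ?_, ?_⟩
  · have h1 : n % (m : ℤ) < (m : ℤ) := Int.emod_lt_of_pos n hmz
    omega
  · have h0 : (0 : ℤ) ≤ n % m := Int.emod_nonneg n (by omega)
    have hk : ((n % (m : ℤ)).toNat : ℤ) = n % m := Int.toNat_of_nonneg h0
    set k : ℕ := (n % (m : ℤ)).toNat
    apply rotMat_congr _ _ (n / m)
    have hdiv : (k : ℤ) + (m : ℤ) * (n / m) = n := by
      rw [hk]; exact Int.emod_add_mul_ediv n m
    have hdivR : (k : ℝ) + (m : ℝ) * ((n / (m : ℤ) : ℤ) : ℝ) = (n : ℝ) := by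
      exact_mod_cast hdiv
    field_simp
    linear_combination hnr - 2 * π * hdivR

lemma classify (A : Matrix (Fin 2) (Fin 2) ℝ) (hA : A * Aᵀ = 1) :
    ∃ θ : ℝ, A = rotMat θ ∨ A = rotMat θ * reflMat := by
  have e00 := congrFun (congrFun hA 0) 0
  have e01 := congrFun (congrFun hA 0) 1
  have e11 := congrFun (congrFun hA 1) 1
  simp [Matrix.mul_apply, Fin.sum_univ_two, Matrix.one_apply] at e00 e01 e11
  set a := A 0 0 with ha
  set b := A 0 1 with hb
  set c := A 1 0 with hc'
  set d := A 1 1 with hd'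
  set t : ℝ := -c * b + d * a with ht
  have hc : c = -t * b := by linear_combination a * e01 - c * e00
  have hd : d = t * a := by linear_combination b * e01 - d * e00
  have ht2 : t ^ 2 = 1 := by
    rw [hc, hd] at e11
    linear_combination e11 - t ^ 2 * e00
  have hA2 : A = !![a, b; c, d] := by
    rw [ha, hb, hc', hd']; exact Matrix.etaExpand_eq A |>.symm
  have ht1 : (t - 1) * (t + 1) = 0 := by linear_combination ht2
  rcases mul_eq_zero.mp ht1 with h | h
  · have h1 : t = 1 := by linarith
    obtain ⟨θ, hcos, hsin⟩ := exists_cos_sin a (-b) (by nlinarith [e00])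
    refine ⟨θ, Or.inl ?_⟩
    rw [hA2, rotMat, hcos, hsin, hc, hd, h1]
    norm_num
  · have h1 : t = -1 := by linarith
    obtain ⟨θ, hcos, hsin⟩ := exists_cos_sin a b (by nlinarith [e00])
    refine ⟨θ, Or.inr ?_⟩
    rw [hA2, rotMat, reflMat, hcos, hsin, hc, hd, h1]
    norm_num [Matrix.mul_fin_two]

lemma exp_pow (m : ℕ) (θ : ℝ) :
    Complex.exp ((θ : ℂ) * Complex.I) ^ m = Complex.exp ((m * θ : ℝ) * Complex.I) := by
  rw [← Complex.exp_nat_mul]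
  congr 1
  push_cast
  ring

theorem stmt5 (m : ℕ) (hm : 1 ≤ m) (p : MvPolynomial (Fin 2) ℝ)
    (hp : ∀ v : Fin 2 → ℝ, eval v p = (((v 0 : ℂ) + (v 1 : ℂ) * Complex.I) ^ m).re)
    (A : Matrix (Fin 2) (Fin 2) ℝ) (hA : A * Aᵀ = 1) :
    (∀ v : Fin 2 → ℝ, eval (A.mulVec v) p = eval v p) ↔
      ∃ k : ℕ, k < m ∧
        (A = rotMat (2 * π * k / m) ∨ A = rotMat (2 * π * k / m) * reflMat) := by
  have hm0 : (m : ℝ) ≠ 0 := Nat.cast_ne_zero.mpr (by omega)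
  have hpc : ∀ v : Fin 2 → ℝ, eval v p = ((toC v) ^ m).re := hp
  -- evaluation along a rotation
  have evrot : ∀ (φ : ℝ) (v : Fin 2 → ℝ),
      eval ((rotMat φ).mulVec v) p
        = (Complex.exp ((m * φ : ℝ) * Complex.I) * (toC v) ^ m).re := by
    intro φ v
    rw [hpc, rot_mulVec, mul_pow, exp_pow]
  -- evaluation along a rotation-reflection
  have evrefl : ∀ (φ : ℝ) (v : Fin 2 → ℝ),
      eval ((rotMat φ * reflMat).mulVec v) p
        = ((starRingEnd ℂ) (Complex.exp ((m * φ : ℝ) * Complex.I)) * (toC v) ^ m).re := by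
    intro φ v
    rw [← Matrix.mulVec_mulVec, hpc, rot_mulVec, refl_mulVec, mul_pow, exp_pow, ← map_pow]
    rw [← Complex.conj_re ((Complex.exp ((m * φ : ℝ) * Complex.I)
      * (starRingEnd ℂ) ((toC v) ^ m))), _root_.map_mul, Complex.conj_conj]
  -- the exponential is 1 at the dihedral angles
  have expone : ∀ k : ℕ, Complex.exp ((m * (2 * π * k / m) : ℝ) * Complex.I) = 1 := by
    intro k
    rw [Complex.exp_eq_one_iff]
    refine ⟨k, ?_⟩
    have : (m : ℝ) * (2 * π * k / m) = 2 * π * k := by field_simp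
    rw [this]
    push_cast
    ring
  constructor
  · intro h
    obtain ⟨θ, hcase | hcase⟩ := classify A hA
    · have hkey : ∀ z : ℂ, (Complex.exp ((m * θ : ℝ) * Complex.I) * z ^ m).re = (z ^ m).re := by
        intro z
        have h' := h ![z.re, z.im]
        rw [hcase, evrot, hpc, toC_mk] at h'
        exact h'
      have hw := key m hm _ hkey
      obtain ⟨k, hk, hrot⟩ := angle_lemma m hm θ hw
      exact ⟨k, hk, Or.inl (hcase.trans hrot)⟩
    · have hkey : ∀ z : ℂ,
          ((starRingEnd ℂ) (Complex.exp ((m * θ : ℝ) * Complex.I)) * z ^ m).re = (z ^ m).re := by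
        intro z
        have h' := h ![z.re, z.im]
        rw [hcase, evrefl, hpc, toC_mk] at h'
        exact h'
      have hw := key m hm _ hkey
      have hw' : Complex.exp ((m * θ : ℝ) * Complex.I) = 1 := by
        have := congrArg (starRingEnd ℂ) hw
        simpa using this
      obtain ⟨k, hk, hrot⟩ := angle_lemma m hm θ hw'
      exact ⟨k, hk, Or.inr (hcase.trans (by rw [hrot]))⟩
  · rintro ⟨k, hk, rfl | rfl⟩ <;> intro v
    · rw [evrot, expone, one_mul, hpc]
    · rw [evrefl, expone, _root_.map_one, one_mul, hpc]
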